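/- arXiv:2103.16416 — 2 statements merged into one kernel-verified Lean document; each statement's English description precedes it below -/
import Mathlib

section
/- Let ≺ be a structured linear order on the vertices of T_φ whose extracted assignment σ satisfies φ and sets exactly k variables to True. Then the feedback arc set implied by ≺ has size at least n·s₁² + 2(n−k)·s₁ + (3n−1)m·s₁·s₂; moreover, if σ(x_n) = False, then it has size at least n·s₁² + 2(n−k)·s₁ + s₁ + (3n−1)m·s₁·s₂. -/
/-! ### The tournament `T_φ` of the reduction

A CNF formula `φ` with variables `x_1, …, x_n` and clauses `c_1, …, c_m` in which no
variable occurs twice in a clause is given by its occurrence function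
`occ : Fin n → Fin m → Option Bool`, where `occ i j = some true` (resp. `some false`)
means `x_i` occurs positively (resp. negatively) in `c_j`, and `none` means `x_i`
does not occur in `c_j`. -/

/-- The names of the `6n + m` modules of the tournament `T_φ`. -/
inductive ModName (n m : ℕ) : Type where
  | A : Fin n → ModName n m
  | B : Fin n → ModName n m
  | C : Fin n → ModName n m
  | D : Fin n → ModName n m
  | E : Fin n → ModName n m
  | F : Fin n → ModName n m
  | T : Fin m → ModName n m
  deriving DecidableEq, Fintype

/-- The group (variable index) of a module, if it is a variable module. -/
def grp? {n m : ℕ} : ModName n m → Option (Fin n)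
  | .A i => some i
  | .B i => some i
  | .C i => some i
  | .D i => some i
  | .E i => some i
  | .F i => some i
  | .T _ => none

/-- The clause index of a module, if it is a clause module. -/
def clause? {n m : ℕ} : ModName n m → Option (Fin m)
  | .T j => some j
  | _ => none

/-- The rank of a module within its group: `A = 0, B = 1, C = 2, D = 3, E = 4, F = 5`. -/
def rk {n m : ℕ} : ModName n m → ℕ
  | .A _ => 0
  | .B _ => 1
  | .C _ => 2
  | .D _ => 3
  | .E _ => 4
  | .F _ => 5
  | .T _ => 6

/-- The size of each module: `A_i, B_i, C_i, D_i, F_i` have size `s₁`; `E_i` has size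
`s₁ + 2` for `i < n` and `s₁ + 3` for `i = n` (i.e. index `n - 1`); `T_j` has size `s₂`. -/
def msize (n m s₁ s₂ : ℕ) : ModName n m → ℕ
  | .A _ => s₁
  | .B _ => s₁
  | .C _ => s₁
  | .D _ => s₁
  | .E i => if (i : ℕ) = n - 1 then s₁ + 3 else s₁ + 2
  | .F _ => s₁
  | .T _ => s₂

/-- The vertex set of `T_φ`: a vertex is a module name together with an index inside
the module. -/
abbrev Vtx (n m s₁ s₂ : ℕ) : Type := Σ M : ModName n m, Fin (msize n m s₁ s₂ M)

/-- Whether all arcs go from `T_j` to the variable module of rank `r` of a group `i`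
with `occ i j = o`: if `x_i` does not occur in `c_j`, `T_j` beats `A_i ∪ B_i ∪ C_i`
(ranks 0,1,2); if positively, `T_j` beats `A_i ∪ B_i ∪ F_i` (ranks 0,1,5); if
negatively, `T_j` beats `A_i ∪ C_i ∪ D_i` (ranks 0,2,3). -/
def tBeats : Option Bool → ℕ → Prop
  | none, r => r = 0 ∨ r = 1 ∨ r = 2
  | some true, r => r = 0 ∨ r = 1 ∨ r = 5
  | some false, r => r = 0 ∨ r = 2 ∨ r = 3

/-- The direction of the arcs between two distinct modules of `T_φ`. -/
def modArc {n m : ℕ} (occ : Fin n → Fin m → Option Bool) (M M' : ModName n m) : Prop :=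
  (∃ i i' : Fin n, grp? M = some i ∧ grp? M' = some i' ∧
    (i < i' ∨ (i = i' ∧ ((rk M < rk M' ∧ ¬(rk M = 3 ∧ rk M' = 5)) ∨
      (rk M = 5 ∧ rk M' = 3))))) ∨
  (∃ j j' : Fin m, clause? M = some j ∧ clause? M' = some j' ∧ j < j') ∨
  (∃ j : Fin m, ∃ i : Fin n, clause? M = some j ∧ grp? M' = some i ∧
    tBeats (occ i j) (rk M')) ∨
  (∃ i : Fin n, ∃ j : Fin m, grp? M = some i ∧ clause? M' = some j ∧
    ¬ tBeats (occ i j) (rk M))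

/-- The arc relation of the tournament `T_φ`: inside a module, arcs follow the
transitive order of the indices; between distinct modules, arcs are given by `modArc`. -/
def arc {n m s₁ s₂ : ℕ} (occ : Fin n → Fin m → Option Bool) :
    Vtx n m s₁ s₂ → Vtx n m s₁ s₂ → Prop :=
  fun u v => (u.1 = v.1 ∧ (u.2 : ℕ) < (v.2 : ℕ)) ∨ (u.1 ≠ v.1 ∧ modArc occ u.1 v.1)

/-- The set of vertices of a module. -/
def mset {n m s₁ s₂ : ℕ} (M : ModName n m) : Set (Vtx n m s₁ s₂) := {v | v.1 = M}

/-- The set of vertices of group `i`: `A_i ∪ B_i ∪ C_i ∪ D_i ∪ E_i ∪ F_i`. -/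
def gset {n m s₁ s₂ : ℕ} (i : Fin n) : Set (Vtx n m s₁ s₂) := {v | grp? v.1 = some i}

/-- The sink of the transitive tournament induced by the module `F_n`. -/
def fnSink (n m s₁ s₂ : ℕ) (hn : 0 < n) (hs₁ : 0 < s₁) : Vtx n m s₁ s₂ :=
  ⟨.F ⟨n - 1, Nat.sub_lt hn one_pos⟩, ⟨s₁ - 1, Nat.sub_lt hs₁ one_pos⟩⟩

/-- The feedback arc set implied by an ordering `r`. -/
def fasSet {V : Type*} (A r : V → V → Prop) : Set (V × V) := {p | A p.1 p.2 ∧ r p.2 p.1}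

/-- `r` is an optimal ordering: a strict linear order whose implied feedback arc set
has minimum size. -/
def IsOptimalOrder {V : Type*} (A r : V → V → Prop) : Prop :=
  IsStrictTotalOrder V r ∧
    ∀ r' : V → V → Prop, IsStrictTotalOrder V r' → (fasSet A r).ncard ≤ (fasSet A r').ncard

/-- `r` places `v` last. -/
def PlacesLast {V : Type*} (r : V → V → Prop) (v : V) : Prop := ∀ u, u ≠ v → r u v

/-- `v` is a Slater winner: some optimal order places `v` last. -/
def SlaterWinner {V : Type*} (A : V → V → Prop) (v : V) : Prop :=
  ∃ r : V → V → Prop, IsOptimalOrder A r ∧ PlacesLast r v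

/-- The assignment `σ` satisfies clause `c_j`. -/
def SatClause {n m : ℕ} (occ : Fin n → Fin m → Option Bool) (σ : Fin n → Bool)
    (j : Fin m) : Prop :=
  ∃ i : Fin n, (occ i j = some true ∧ σ i = true) ∨ (occ i j = some false ∧ σ i = false)

/-- The assignment `σ` satisfies `φ`. -/
def Sat {n m : ℕ} (occ : Fin n → Fin m → Option Bool) (σ : Fin n → Bool) : Prop :=
  ∀ j : Fin m, SatClause occ σ j

/-- The weight of a truth assignment: the number of variables set to `true`. -/
def wt {n : ℕ} (σ : Fin n → Bool) : ℕ := (Finset.univ.filter (fun i => σ i = true)).card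

/-- Every element of `S` comes before every element of `S'` in the order `r`. -/
def Before {V : Type*} (r : V → V → Prop) (S S' : Set V) : Prop := ∀ u ∈ S, ∀ v ∈ S', r u v

/-- `S` is contiguous in the ordering `r`. -/
def Contig {V : Type*} (r : V → V → Prop) (S : Set V) : Prop :=
  ¬ ∃ x ∈ S, ∃ y ∈ S, ∃ z, z ∉ S ∧ r x z ∧ r z y

/-- A linear order on the vertices of `T_φ` is structured if every module is contiguous,
groups appear in increasing order, within each group `A_i ≺ B_i ≺ C_i` come before
`D_i ∪ E_i ∪ F_i`, and the last three modules appear in one of the cyclic orders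
`D_i ≺ E_i ≺ F_i`, `E_i ≺ F_i ≺ D_i`, `F_i ≺ D_i ≺ E_i`. -/
def Structured {n m s₁ s₂ : ℕ} (r : Vtx n m s₁ s₂ → Vtx n m s₁ s₂ → Prop) : Prop :=
  (∀ M : ModName n m, Contig r (mset M)) ∧
  (∀ i i' : Fin n, i < i' → Before r (gset i) (gset i')) ∧
  (∀ i : Fin n,
    Before r (mset (.A i)) (mset (.B i)) ∧
    Before r (mset (.B i)) (mset (.C i)) ∧
    Before r (mset (.A i) ∪ mset (.B i) ∪ mset (.C i))
      (mset (.D i) ∪ mset (.E i) ∪ mset (.F i))) ∧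
  (∀ i : Fin n,
    (Before r (mset (.D i)) (mset (.E i)) ∧ Before r (mset (.E i)) (mset (.F i))) ∨
    (Before r (mset (.E i)) (mset (.F i)) ∧ Before r (mset (.F i)) (mset (.D i))) ∨
    (Before r (mset (.F i)) (mset (.D i)) ∧ Before r (mset (.D i)) (mset (.E i))))

/-- `σ` is the assignment extracted from the structured order `r`: `x_i` is set to true
iff `D_i ≺ E_i ≺ F_i`. -/
def Extracted {n m s₁ s₂ : ℕ} (r : Vtx n m s₁ s₂ → Vtx n m s₁ s₂ → Prop)
    (σ : Fin n → Bool) : Prop :=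
  ∀ i : Fin n, σ i = true ↔
    (Before r (mset (.D i)) (mset (.E i)) ∧ Before r (mset (.E i)) (mset (.F i)))


section Stmt16Aux

open Finset
open scoped Classical

variable {n m s₁ s₂ : ℕ}

lemma msize_pos (hs₁ : 0 < s₁) (hs₂ : 0 < s₂) (M : ModName n m) :
    0 < msize n m s₁ s₂ M := by
  cases M <;> simp only [msize] <;> first | omega | (split <;> omega)

lemma le_msize_of_grp (hs₁ : 0 < s₁) {M : ModName n m} {i : Fin n} (h : grp? M = some i) :
    s₁ ≤ msize n m s₁ s₂ M := by
  cases M <;> simp only [grp?, msize] at h ⊢ <;> first | omega | (split <;> omega) | simp at h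

lemma mem_mset {M : ModName n m} {v : Vtx n m s₁ s₂} : v ∈ mset M ↔ v.1 = M := Iff.rfl

lemma mset_nonempty (hs₁ : 0 < s₁) (hs₂ : 0 < s₂) (M : ModName n m) :
    (mset M : Set (Vtx n m s₁ s₂)).Nonempty :=
  ⟨⟨M, ⟨0, msize_pos hs₁ hs₂ M⟩⟩, rfl⟩

lemma ncard_mset (M : ModName n m) :
    (mset M : Set (Vtx n m s₁ s₂)).ncard = msize n m s₁ s₂ M := by
  have h : (mset M : Set (Vtx n m s₁ s₂)) =
      Set.range (fun x : Fin (msize n m s₁ s₂ M) => (⟨M, x⟩ : Vtx n m s₁ s₂)) := by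
    ext ⟨N, x⟩
    simp only [mem_mset, Set.mem_range]
    constructor
    · rintro rfl; exact ⟨x, rfl⟩
    · rintro ⟨y, hy⟩; cases hy; rfl
  have hinj : Function.Injective (fun x : Fin (msize n m s₁ s₂ M) => (⟨M, x⟩ : Vtx n m s₁ s₂)) := by
    intro a b hab
    simpa using hab
  rw [h, ← Set.image_univ, Set.ncard_image_of_injective _ hinj, Set.ncard_univ,
    Nat.card_eq_fintype_card, Fintype.card_fin]

lemma ncard_prod' {α β : Type*} (s : Set α) (t : Set β) :
    (s ×ˢ t).ncard = s.ncard * t.ncard := by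
  rw [← Nat.card_coe_set_eq, ← Nat.card_coe_set_eq, ← Nat.card_coe_set_eq,
    ← Nat.card_prod]
  exact Nat.card_congr (Equiv.Set.prod s t)

section Order

variable {V : Type*} {r : V → V → Prop}

lemma before_trans (hr : IsStrictTotalOrder V r) {S1 S2 S3 : Set V}
    (h12 : Before r S1 S2) (h23 : Before r S2 S3) (h2 : S2.Nonempty) :
    Before r S1 S3 := by
  haveI := hr
  obtain ⟨w, hw⟩ := h2
  intro u hu v hv
  exact trans_of r (h12 u hu w hw) (h23 w hw v hv)

lemma before_asymm (hr : IsStrictTotalOrder V r) {S S' : Set V}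
    (h : Before r S S') (hS : S.Nonempty) (hS' : S'.Nonempty) :
    ¬ Before r S' S := by
  haveI := hr
  obtain ⟨u, hu⟩ := hS
  obtain ⟨v, hv⟩ := hS'
  intro h'
  exact irrefl_of r u (trans_of r (h u hu v hv) (h' v hv u hu))

lemma contig_before_or (hr : IsStrictTotalOrder V r) {S S' : Set V}
    (hS : Contig r S) (hS' : Contig r S')
    (hdisj : ∀ x ∈ S, x ∉ S') (hne : S.Nonempty) (hne' : S'.Nonempty) :
    Before r S S' ∨ Before r S' S := by
  haveI := hr
  by_cases h : Before r S S'
  · exact Or.inl h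
  · right
    rw [Before] at h
    push_neg at h
    obtain ⟨u, hu, v, hv, huv⟩ := h
    have huv' : u ≠ v := fun he => hdisj u hu (he ▸ hv)
    have hvu : r v u := by
      rcases trichotomous_of r u v with h1 | h1 | h1
      · exact absurd h1 huv
      · exact absurd h1 huv'
      · exact h1
    intro v' hv' u' hu'
    by_contra hcon
    have hne'' : u' ≠ v' := fun he => hdisj u' hu' (he ▸ hv')
    have hUV : r u' v' := by
      rcases trichotomous_of r u' v' with h1 | h1 | h1
      · exact h1
      · exact absurd h1 hne''
      · exact absurd h1 hcon
    rcases trichotomous_of r u' v with h1 | h1 | h1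
    · exact hS ⟨u', hu', u, hu, v, fun hvS => hdisj v hvS hv, h1, hvu⟩
    · exact hdisj u' hu' (h1 ▸ hv)
    · exact hS' ⟨v, hv, v', hv', u', fun hu'S' => hdisj u' hu' hu'S', h1, hUV⟩

end Order

lemma two_le_card {α : Type*} [DecidableEq α] {s : Finset α} {a b : α}
    (ha : a ∈ s) (hb : b ∈ s) (hab : a ≠ b) : 2 ≤ s.card := by
  have hsub : ({a, b} : Finset α) ⊆ s := by
    intro x hx
    simp only [Finset.mem_insert, Finset.mem_singleton] at hx
    rcases hx with rfl | rfl <;> assumption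
  have : ({a, b} : Finset α).card = 2 := by
    rw [Finset.card_insert_of_notMem (by simpa using hab), Finset.card_singleton]
  rw [← this]
  exact Finset.card_le_card hsub

lemma three_le_card {α : Type*} [DecidableEq α] {s : Finset α} {a b c : α}
    (ha : a ∈ s) (hb : b ∈ s) (hc : c ∈ s)
    (hab : a ≠ b) (hac : a ≠ c) (hbc : b ≠ c) : 3 ≤ s.card := by
  have hsub : ({a, b, c} : Finset α) ⊆ s := by
    intro x hx
    simp only [Finset.mem_insert, Finset.mem_singleton] at hx
    rcases hx with rfl | rfl | rfl <;> assumption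
  have : ({a, b, c} : Finset α).card = 3 := by
    rw [Finset.card_insert_of_notMem (by simp [hab, hac]),
      Finset.card_insert_of_notMem (by simpa using hbc), Finset.card_singleton]
  rw [← this]
  exact Finset.card_le_card hsub

@[simp] lemma tBeats_none (q : ℕ) : tBeats none q ↔ (q = 0 ∨ q = 1 ∨ q = 2) := Iff.rfl
@[simp] lemma tBeats_pos (q : ℕ) : tBeats (some true) q ↔ (q = 0 ∨ q = 1 ∨ q = 5) := Iff.rfl
@[simp] lemma tBeats_neg (q : ℕ) : tBeats (some false) q ↔ (q = 0 ∨ q = 2 ∨ q = 3) := Iff.rfl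

variable (occ : Fin n → Fin m → Option Bool) (r : Vtx n m s₁ s₂ → Vtx n m s₁ s₂ → Prop)

/-- The number of backward arcs from module `q.1` to module `q.2`. -/
noncomputable def mslice (q : ModName n m × ModName n m) : ℕ :=
  (fasSet (arc occ) r ∩
    (fun p : Vtx n m s₁ s₂ × Vtx n m s₁ s₂ => (p.1.1, p.2.1)) ⁻¹' {q}).ncard

lemma sum_slice_le (t : Finset (ModName n m × ModName n m)) :
    ∑ q ∈ t, mslice occ r q ≤ (fasSet (arc occ) r).ncard := by
  classical
  set f : Vtx n m s₁ s₂ × Vtx n m s₁ s₂ → ModName n m × ModName n m :=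
    fun p => (p.1.1, p.2.1) with hf
  have hfin : (fasSet (arc occ) r).Finite := Set.toFinite _
  rw [Set.ncard_eq_toFinset_card _ hfin]
  have hslice : ∀ q, mslice occ r q = (hfin.toFinset.filter (fun p => f p = q)).card := by
    intro q
    rw [mslice]
    have heq : fasSet (arc occ) r ∩ f ⁻¹' {q} =
        ↑(hfin.toFinset.filter fun p => f p = q) := by
      ext p
      simp only [Set.mem_inter_iff, Set.mem_preimage, Set.mem_singleton_iff,
        Finset.coe_filter, Set.mem_setOf_eq, Set.Finite.mem_toFinset]
    rw [heq, Set.ncard_coe_finset]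
  calc ∑ q ∈ t, mslice occ r q
      = ∑ q ∈ t, (hfin.toFinset.filter (fun p => f p = q)).card := by
        exact Finset.sum_congr rfl fun q _ => hslice q
    _ = (hfin.toFinset.filter (fun p => f p ∈ t)).card := by
        rw [Finset.card_eq_sum_card_fiberwise
          (f := f) (s := hfin.toFinset.filter (fun p => f p ∈ t)) (t := t) (fun x hx => (Finset.mem_filter.mp hx).2)]
        refine Finset.sum_congr rfl fun q hq => ?_
        congr 1
        rw [Finset.filter_filter]
        apply Finset.filter_congr
        intro p _
        constructor
        · intro h; exact ⟨h ▸ hq, h⟩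
        · intro h; exact h.2
    _ ≤ hfin.toFinset.card := Finset.card_filter_le _ _

lemma slice_lb {M M' : ModName n m} (hne : M ≠ M') (harc : modArc occ M M')
    (hb : Before r (mset M') (mset M)) :
    msize n m s₁ s₂ M * msize n m s₁ s₂ M' ≤ mslice occ r (M, M') := by
  have hsub : (mset M ×ˢ mset M' : Set (Vtx n m s₁ s₂ × Vtx n m s₁ s₂)) ⊆
      fasSet (arc occ) r ∩
        (fun p : Vtx n m s₁ s₂ × Vtx n m s₁ s₂ => (p.1.1, p.2.1)) ⁻¹' {(M, M')} := by
    rintro ⟨u, v⟩ ⟨hu, hv⟩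
    have hu' : u.1 = M := hu
    have hv' : v.1 = M' := hv
    refine ⟨⟨Or.inr ⟨?_, ?_⟩, ?_⟩, ?_⟩
    · rw [hu', hv']; exact hne
    · rw [hu', hv']; exact harc
    · exact hb v hv u hu
    · simp [hu', hv']
  calc msize n m s₁ s₂ M * msize n m s₁ s₂ M'
      = (mset M ×ˢ mset M' : Set (Vtx n m s₁ s₂ × Vtx n m s₁ s₂)).ncard := by
        rw [ncard_prod', ncard_mset, ncard_mset]
    _ ≤ _ := Set.ncard_le_ncard hsub (Set.toFinite _)

/-- A variable module of group `i` whose backward arcs with `T_j` form a full product. -/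
def GoodP (i : Fin n) (j : Fin m) (M : ModName n m) : Prop :=
  (tBeats (occ i j) (rk M) ∧ Before r (mset M) (mset (.T j))) ∨
  (¬ tBeats (occ i j) (rk M) ∧ Before r (mset (.T j)) (mset M))

noncomputable def goods (i : Fin n) (j : Fin m) : Finset (ModName n m) :=
  ({.A i, .B i, .C i, .D i, .E i, .F i} : Finset (ModName n m)).filter (GoodP occ r i j)

/-- `T_j` is placed inside group `i`. -/
def TjSplit (i : Fin n) (j : Fin m) : Prop :=
  (∃ M : ModName n m, grp? M = some i ∧ Before r (mset M) (mset (.T j))) ∧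
  (∃ M : ModName n m, grp? M = some i ∧ Before r (mset (.T j)) (mset M))

lemma mem_goods {i : Fin n} {j : Fin m} {M : ModName n m} (h : M ∈ goods occ r i j) :
    grp? M = some i ∧ GoodP occ r i j M := by
  rw [goods, Finset.mem_filter] at h
  refine ⟨?_, h.2⟩
  have h1 := h.1
  simp only [Finset.mem_insert, Finset.mem_singleton] at h1
  rcases h1 with rfl | rfl | rfl | rfl | rfl | rfl <;> rfl


section Core

variable (hs₁ : 0 < s₁) (hs₂ : 0 < s₂) (hr : IsStrictTotalOrder (Vtx n m s₁ s₂) r)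
  (hstr : Structured r)

include hs₁ hs₂ hr hstr

lemma goods_two (i : Fin n) (j : Fin m) : 2 ≤ (goods occ r i j).card := by
  haveI := hr
  have ne : ∀ M : ModName n m, (mset M : Set (Vtx n m s₁ s₂)).Nonempty :=
    mset_nonempty hs₁ hs₂
  have hAB : Before r (mset (.A i)) (mset (.B i)) := (hstr.2.2.1 i).1
  have hBC : Before r (mset (.B i)) (mset (.C i)) := (hstr.2.2.1 i).2.1
  have hCD : Before r (mset (.C i)) (mset (.D i)) := fun u hu v hv =>
    (hstr.2.2.1 i).2.2 u (Or.inr hu) v (Or.inl (Or.inl hv))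
  have hCE : Before r (mset (.C i)) (mset (.E i)) := fun u hu v hv =>
    (hstr.2.2.1 i).2.2 u (Or.inr hu) v (Or.inl (Or.inr hv))
  have tot : ∀ M : ModName n m, M ≠ .T j →
      Before r (mset M) (mset (.T j)) ∨ Before r (mset (.T j)) (mset M) := by
    intro M hM
    exact contig_before_or hr (hstr.1 M) (hstr.1 (.T j))
      (fun x hx hx' => hM ((mem_mset.mp hx) ▸ (mem_mset.mp hx'))) (ne M) (ne _)
  have impBA : Before r (mset (.B i)) (mset (.T j)) →
      Before r (mset (.A i)) (mset (.T j)) := fun h => before_trans hr hAB h (ne _)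
  have impCB : Before r (mset (.C i)) (mset (.T j)) →
      Before r (mset (.B i)) (mset (.T j)) := fun h => before_trans hr hBC h (ne _)
  have impDC : Before r (mset (.D i)) (mset (.T j)) →
      Before r (mset (.C i)) (mset (.T j)) := fun h => before_trans hr hCD h (ne _)
  have impEC : Before r (mset (.E i)) (mset (.T j)) →
      Before r (mset (.C i)) (mset (.T j)) := fun h => before_trans hr hCE h (ne _)
  have memg : ∀ M : ModName n m,
      M ∈ ({.A i, .B i, .C i, .D i, .E i, .F i} : Finset (ModName n m)) →
      GoodP occ r i j M → M ∈ goods occ r i j := fun M h1 h2 =>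
    Finset.mem_filter.mpr ⟨h1, h2⟩
  by_cases hbA : Before r (mset (.A i)) (mset (.T j))
  · -- A is good
    have hgA : (ModName.A i : ModName n m) ∈ goods occ r i j := by
      refine memg _ (by simp) (Or.inl ⟨?_, hbA⟩)
      rcases h : occ i j with _ | b
      · simp [rk]
      · cases b <;> simp [rk]
    rcases h : occ i j with _ | b
    · -- occ = none
      by_cases hbB : Before r (mset (.B i)) (mset (.T j))
      · have hgB : (ModName.B i : ModName n m) ∈ goods occ r i j :=
          memg _ (by simp) (Or.inl ⟨by simp [h, rk], hbB⟩)
        exact two_le_card hgA hgB (by simp)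
      · have hbD : ¬ Before r (mset (.D i)) (mset (.T j)) :=
          fun hd => hbB (impCB (impDC hd))
        have hTD := (tot (.D i) (by simp)).resolve_left hbD
        have hgD : (ModName.D i : ModName n m) ∈ goods occ r i j :=
          memg _ (by simp) (Or.inr ⟨by simp [h, rk], hTD⟩)
        exact two_le_card hgA hgD (by simp)
    · cases b
      · -- occ = some false
        by_cases hbB : Before r (mset (.B i)) (mset (.T j))
        · by_cases hbC : Before r (mset (.C i)) (mset (.T j))
          · have hgC : (ModName.C i : ModName n m) ∈ goods occ r i j :=
              memg _ (by simp) (Or.inl ⟨by simp [h, rk], hbC⟩)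
            exact two_le_card hgA hgC (by simp)
          · have hbE : ¬ Before r (mset (.E i)) (mset (.T j)) :=
              fun he => hbC (impEC he)
            have hTE := (tot (.E i) (by simp)).resolve_left hbE
            have hgE : (ModName.E i : ModName n m) ∈ goods occ r i j :=
              memg _ (by simp) (Or.inr ⟨by simp [h, rk], hTE⟩)
            exact two_le_card hgA hgE (by simp)
        · have hTB := (tot (.B i) (by simp)).resolve_left hbB
          have hgB : (ModName.B i : ModName n m) ∈ goods occ r i j :=
            memg _ (by simp) (Or.inr ⟨by simp [h, rk], hTB⟩)
          exact two_le_card hgA hgB (by simp)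
      · -- occ = some true
        by_cases hbC : Before r (mset (.C i)) (mset (.T j))
        · have hgB : (ModName.B i : ModName n m) ∈ goods occ r i j :=
            memg _ (by simp) (Or.inl ⟨by simp [h, rk], impCB hbC⟩)
          exact two_le_card hgA hgB (by simp)
        · have hTC := (tot (.C i) (by simp)).resolve_left hbC
          have hgC : (ModName.C i : ModName n m) ∈ goods occ r i j :=
            memg _ (by simp) (Or.inr ⟨by simp [h, rk], hTC⟩)
          exact two_le_card hgA hgC (by simp)
  · -- all modules of group i come after T_j
    have hbB : ¬ Before r (mset (.B i)) (mset (.T j)) := fun hb => hbA (impBA hb)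
    have hbC : ¬ Before r (mset (.C i)) (mset (.T j)) := fun hb => hbB (impCB hb)
    have hbD : ¬ Before r (mset (.D i)) (mset (.T j)) := fun hb => hbC (impDC hb)
    have hbE : ¬ Before r (mset (.E i)) (mset (.T j)) := fun hb => hbC (impEC hb)
    have hTB := (tot (.B i) (by simp)).resolve_left hbB
    have hTC := (tot (.C i) (by simp)).resolve_left hbC
    have hTD := (tot (.D i) (by simp)).resolve_left hbD
    have hTE := (tot (.E i) (by simp)).resolve_left hbE
    rcases h : occ i j with _ | b
    · have hgD : (ModName.D i : ModName n m) ∈ goods occ r i j :=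
        memg _ (by simp) (Or.inr ⟨by simp [h, rk], hTD⟩)
      have hgE : (ModName.E i : ModName n m) ∈ goods occ r i j :=
        memg _ (by simp) (Or.inr ⟨by simp [h, rk], hTE⟩)
      exact two_le_card hgD hgE (by simp)
    · cases b
      · have hgB : (ModName.B i : ModName n m) ∈ goods occ r i j :=
          memg _ (by simp) (Or.inr ⟨by simp [h, rk], hTB⟩)
        have hgE : (ModName.E i : ModName n m) ∈ goods occ r i j :=
          memg _ (by simp) (Or.inr ⟨by simp [h, rk], hTE⟩)
        exact two_le_card hgB hgE (by simp)
      · have hgC : (ModName.C i : ModName n m) ∈ goods occ r i j :=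
          memg _ (by simp) (Or.inr ⟨by simp [h, rk], hTC⟩)
        have hgD : (ModName.D i : ModName n m) ∈ goods occ r i j :=
          memg _ (by simp) (Or.inr ⟨by simp [h, rk], hTD⟩)
        exact two_le_card hgC hgD (by simp)

lemma goods_three (i : Fin n) (j : Fin m) (hns : ¬ TjSplit r i j) :
    3 ≤ (goods occ r i j).card := by
  haveI := hr
  have ne : ∀ M : ModName n m, (mset M : Set (Vtx n m s₁ s₂)).Nonempty :=
    mset_nonempty hs₁ hs₂
  have hAB : Before r (mset (.A i)) (mset (.B i)) := (hstr.2.2.1 i).1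
  have hBC : Before r (mset (.B i)) (mset (.C i)) := (hstr.2.2.1 i).2.1
  have hCD : Before r (mset (.C i)) (mset (.D i)) := fun u hu v hv =>
    (hstr.2.2.1 i).2.2 u (Or.inr hu) v (Or.inl (Or.inl hv))
  have hCE : Before r (mset (.C i)) (mset (.E i)) := fun u hu v hv =>
    (hstr.2.2.1 i).2.2 u (Or.inr hu) v (Or.inl (Or.inr hv))
  have hCF : Before r (mset (.C i)) (mset (.F i)) := fun u hu v hv =>
    (hstr.2.2.1 i).2.2 u (Or.inr hu) v (Or.inr hv)
  have tot : ∀ M : ModName n m, M ≠ .T j →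
      Before r (mset M) (mset (.T j)) ∨ Before r (mset (.T j)) (mset M) := by
    intro M hM
    exact contig_before_or hr (hstr.1 M) (hstr.1 (.T j))
      (fun x hx hx' => hM ((mem_mset.mp hx) ▸ (mem_mset.mp hx'))) (ne M) (ne _)
  have memg : ∀ M : ModName n m,
      M ∈ ({.A i, .B i, .C i, .D i, .E i, .F i} : Finset (ModName n m)) →
      GoodP occ r i j M → M ∈ goods occ r i j := fun M h1 h2 =>
    Finset.mem_filter.mpr ⟨h1, h2⟩
  by_cases hbA : Before r (mset (.A i)) (mset (.T j))
  · -- no module of group i may come after T_j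
    have hnoafter : ∀ M : ModName n m, grp? M = some i →
        ¬ Before r (mset (.T j)) (mset M) := by
      intro M hgM hTM
      exact hns ⟨⟨.A i, rfl, hbA⟩, ⟨M, hgM, hTM⟩⟩
    have hb : ∀ M : ModName n m, grp? M = some i → M ≠ .T j →
        Before r (mset M) (mset (.T j)) := fun M hgM hM =>
      (tot M hM).resolve_right (hnoafter M hgM)
    have hbB := hb (.B i) rfl (by simp)
    have hbC := hb (.C i) rfl (by simp)
    have hbD := hb (.D i) rfl (by simp)
    have hbF := hb (.F i) rfl (by simp)
    rcases h : occ i j with _ | b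
    · exact three_le_card
        (memg (.A i) (by simp) (Or.inl ⟨by simp [rk, h], hbA⟩))
        (memg (.B i) (by simp) (Or.inl ⟨by simp [rk, h], hbB⟩))
        (memg (.C i) (by simp) (Or.inl ⟨by simp [rk, h], hbC⟩))
        (by simp) (by simp) (by simp)
    · cases b
      · exact three_le_card
          (memg (.A i) (by simp) (Or.inl ⟨by simp [rk, h], hbA⟩))
          (memg (.C i) (by simp) (Or.inl ⟨by simp [rk, h], hbC⟩))
          (memg (.D i) (by simp) (Or.inl ⟨by simp [rk, h], hbD⟩))
          (by simp) (by simp) (by simp)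
      · exact three_le_card
          (memg (.A i) (by simp) (Or.inl ⟨by simp [rk, h], hbA⟩))
          (memg (.B i) (by simp) (Or.inl ⟨by simp [rk, h], hbB⟩))
          (memg (.F i) (by simp) (Or.inl ⟨by simp [rk, h], hbF⟩))
          (by simp) (by simp) (by simp)
  · have impBA : Before r (mset (.B i)) (mset (.T j)) →
        Before r (mset (.A i)) (mset (.T j)) := fun h => before_trans hr hAB h (ne _)
    have impCB : Before r (mset (.C i)) (mset (.T j)) →
        Before r (mset (.B i)) (mset (.T j)) := fun h => before_trans hr hBC h (ne _)
    have impDC : Before r (mset (.D i)) (mset (.T j)) →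
        Before r (mset (.C i)) (mset (.T j)) := fun h => before_trans hr hCD h (ne _)
    have impEC : Before r (mset (.E i)) (mset (.T j)) →
        Before r (mset (.C i)) (mset (.T j)) := fun h => before_trans hr hCE h (ne _)
    have impFC : Before r (mset (.F i)) (mset (.T j)) →
        Before r (mset (.C i)) (mset (.T j)) := fun h => before_trans hr hCF h (ne _)
    have hbB : ¬ Before r (mset (.B i)) (mset (.T j)) := fun hb => hbA (impBA hb)
    have hbC : ¬ Before r (mset (.C i)) (mset (.T j)) := fun hb => hbB (impCB hb)
    have hbD : ¬ Before r (mset (.D i)) (mset (.T j)) := fun hb => hbC (impDC hb)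
    have hbE : ¬ Before r (mset (.E i)) (mset (.T j)) := fun hb => hbC (impEC hb)
    have hbF : ¬ Before r (mset (.F i)) (mset (.T j)) := fun hb => hbC (impFC hb)
    have hTB := (tot (.B i) (by simp)).resolve_left hbB
    have hTC := (tot (.C i) (by simp)).resolve_left hbC
    have hTD := (tot (.D i) (by simp)).resolve_left hbD
    have hTE := (tot (.E i) (by simp)).resolve_left hbE
    have hTF := (tot (.F i) (by simp)).resolve_left hbF
    rcases h : occ i j with _ | b
    · exact three_le_card
        (memg (.D i) (by simp) (Or.inr ⟨by simp [rk, h], hTD⟩))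
        (memg (.E i) (by simp) (Or.inr ⟨by simp [rk, h], hTE⟩))
        (memg (.F i) (by simp) (Or.inr ⟨by simp [rk, h], hTF⟩))
        (by simp) (by simp) (by simp)
    · cases b
      · exact three_le_card
          (memg (.B i) (by simp) (Or.inr ⟨by simp [rk, h], hTB⟩))
          (memg (.E i) (by simp) (Or.inr ⟨by simp [rk, h], hTE⟩))
          (memg (.F i) (by simp) (Or.inr ⟨by simp [rk, h], hTF⟩))
          (by simp) (by simp) (by simp)
      · exact three_le_card
          (memg (.C i) (by simp) (Or.inr ⟨by simp [rk, h], hTC⟩))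
          (memg (.D i) (by simp) (Or.inr ⟨by simp [rk, h], hTD⟩))
          (memg (.E i) (by simp) (Or.inr ⟨by simp [rk, h], hTE⟩))
          (by simp) (by simp) (by simp)

lemma split_pair {j : Fin m} {i i' : Fin n} (hii : i < i')
    (h : ∃ M : ModName n m, grp? M = some i ∧ Before r (mset (.T j)) (mset M))
    (h' : ∃ M : ModName n m, grp? M = some i' ∧ Before r (mset M) (mset (.T j))) :
    False := by
  haveI := hr
  obtain ⟨M, hgM, hTM⟩ := h
  obtain ⟨M', hgM', hMT⟩ := h'
  have hMM' : Before r (mset M) (mset M') := by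
    intro u hu v hv
    exact hstr.2.1 i i' hii u (by simp only [gset, Set.mem_setOf_eq, mem_mset.mp hu, hgM])
      v (by simp only [gset, Set.mem_setOf_eq, mem_mset.mp hv, hgM'])
  obtain ⟨t, ht⟩ := mset_nonempty hs₁ hs₂ (ModName.T j : ModName n m)
  obtain ⟨u, hu⟩ := mset_nonempty hs₁ hs₂ M
  obtain ⟨v, hv⟩ := mset_nonempty hs₁ hs₂ M'
  exact irrefl_of r t (trans_of r (trans_of r (hTM t ht u hu) (hMM' u hu v hv))
    (hMT v hv t ht))

lemma split_unique {j : Fin m} {i i' : Fin n} (hii : i ≠ i')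
    (h : TjSplit r i j) (h' : TjSplit r i' j) : False := by
  rcases lt_or_gt_of_ne hii with hlt | hlt
  · exact split_pair (r := r) hs₁ hs₂ hr hstr hlt h.2 h'.1
  · exact split_pair (r := r) hs₁ hs₂ hr hstr hlt h'.2 h.1

end Core

end Stmt16Aux

/-- A structured order whose extracted assignment `σ` satisfies `φ` and sets exactly `k`
variables to true implies a feedback arc set of size at least
`n·s₁² + 2(n−k)·s₁ + (3n−1)m·s₁·s₂`; if moreover `σ(x_n) = False`, of size at least
`n·s₁² + 2(n−k)·s₁ + s₁ + (3n−1)m·s₁·s₂`. -/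
theorem stmt16 (n m s₁ s₂ : ℕ) (hn : 0 < n) (hm : 0 < m) (hs₁ : 0 < s₁) (hs₂ : 0 < s₂)
    (occ : Fin n → Fin m → Option Bool)
    (h3lit : ∀ j : Fin m, ({i : Fin n | occ i j ≠ none}).ncard ≤ 3)
    (hallF : ∀ j : Fin m, ∃ i : Fin n, occ i j = some false)
    (r : Vtx n m s₁ s₂ → Vtx n m s₁ s₂ → Prop) (hr : IsStrictTotalOrder (Vtx n m s₁ s₂) r)
    (hstr : Structured r)
    (σ : Fin n → Bool) (hσ : Extracted r σ) (hsat : Sat occ σ) (k : ℕ)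
    (hk : (Finset.univ.filter (fun i : Fin n => σ i = true)).card = k) :
    n * s₁ ^ 2 + 2 * (n - k) * s₁ + (3 * n - 1) * m * s₁ * s₂ ≤
      (fasSet (arc occ) r).ncard ∧
    (σ ⟨n - 1, Nat.sub_lt hn one_pos⟩ = false →
      n * s₁ ^ 2 + 2 * (n - k) * s₁ + s₁ + (3 * n - 1) * m * s₁ * s₂ ≤
        (fasSet (arc occ) r).ncard) := by
  classical
  haveI := hr
  have ne : ∀ M : ModName n m, (mset M : Set (Vtx n m s₁ s₂)).Nonempty :=
    mset_nonempty hs₁ hs₂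
  set lst : Fin n := ⟨n - 1, Nat.sub_lt hn one_pos⟩ with hlst
  have hkn : k ≤ n := by
    rw [← hk]
    calc (Finset.univ.filter (fun i : Fin n => σ i = true)).card
        ≤ (Finset.univ : Finset (Fin n)).card := Finset.card_filter_le _ _
      _ = n := by simp
  -- Step 1 : group-internal backward arcs
  have hq : ∀ i : Fin n, ∃ q : ModName n m × ModName n m,
      grp? q.1 = some i ∧ grp? q.2 = some i ∧
      s₁ * s₁ + (if σ i = true then 0 else 2 * s₁ + (if (i : ℕ) = n - 1 then s₁ else 0))
        ≤ mslice occ r q := by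
    intro i
    rcases hstr.2.2.2 i with ⟨h1, h2⟩ | ⟨h1, h2⟩ | ⟨h1, h2⟩
    · -- D ≺ E ≺ F
      have hσi : σ i = true := (hσ i).mpr ⟨h1, h2⟩
      refine ⟨(.F i, .D i), rfl, rfl, ?_⟩
      have hsl := slice_lb (occ := occ) (r := r) (M := ModName.F i) (M' := ModName.D i)
        (by simp) (Or.inl ⟨i, i, rfl, rfl, Or.inr ⟨rfl, Or.inr ⟨rfl, rfl⟩⟩⟩)
        (before_trans hr h1 h2 (ne _))
      rw [hσi, if_pos rfl]
      simpa [msize] using hsl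
    · -- E ≺ F ≺ D
      have hσi : σ i = false := by
        cases hb : σ i
        · rfl
        · exfalso
          obtain ⟨hDE, hEF⟩ := (hσ i).mp hb
          obtain ⟨d, hd⟩ := ne (.D i)
          obtain ⟨e, he⟩ := ne (.E i)
          obtain ⟨f, hf⟩ := ne (.F i)
          exact irrefl_of r d (trans_of r (trans_of r (hDE d hd e he) (hEF e he f hf))
            (h2 f hf d hd))
      refine ⟨(.D i, .E i), rfl, rfl, ?_⟩
      have hsl := slice_lb (occ := occ) (r := r) (M := ModName.D i) (M' := ModName.E i)
        (by simp) (Or.inl ⟨i, i, rfl, rfl, Or.inr ⟨rfl, Or.inl ⟨by norm_num [rk], by simp [rk]⟩⟩⟩)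
        (before_trans hr h1 h2 (ne _))
      rw [hσi, if_neg (by simp)]
      refine le_trans ?_ hsl
      by_cases hi : (i : ℕ) = n - 1
      · have hE : msize n m s₁ s₂ (ModName.E i) = s₁ + 3 := by simp [msize, hi]
        have hD : msize n m s₁ s₂ (ModName.D i) = s₁ := rfl
        rw [if_pos hi, hE, hD]
        exact Nat.le_of_eq (by ring)
      · have hE : msize n m s₁ s₂ (ModName.E i) = s₁ + 2 := by simp [msize, hi]
        have hD : msize n m s₁ s₂ (ModName.D i) = s₁ := rfl
        rw [if_neg hi, hE, hD]
        exact Nat.le_of_eq (by ring)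
    · -- F ≺ D ≺ E
      have hσi : σ i = false := by
        cases hb : σ i
        · rfl
        · exfalso
          obtain ⟨hDE, hEF⟩ := (hσ i).mp hb
          obtain ⟨d, hd⟩ := ne (.D i)
          obtain ⟨e, he⟩ := ne (.E i)
          obtain ⟨f, hf⟩ := ne (.F i)
          exact irrefl_of r f (trans_of r (trans_of r (h1 f hf d hd) (hDE d hd e he))
            (hEF e he f hf))
      refine ⟨(.E i, .F i), rfl, rfl, ?_⟩
      have hsl := slice_lb (occ := occ) (r := r) (M := ModName.E i) (M' := ModName.F i)
        (by simp) (Or.inl ⟨i, i, rfl, rfl, Or.inr ⟨rfl, Or.inl ⟨by norm_num [rk], by simp [rk]⟩⟩⟩)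
        (before_trans hr h1 h2 (ne _))
      rw [hσi, if_neg (by simp)]
      refine le_trans ?_ hsl
      by_cases hi : (i : ℕ) = n - 1
      · have hE : msize n m s₁ s₂ (ModName.E i) = s₁ + 3 := by simp [msize, hi]
        have hF : msize n m s₁ s₂ (ModName.F i) = s₁ := rfl
        rw [if_pos hi, hE, hF]
        exact Nat.le_of_eq (by ring)
      · have hE : msize n m s₁ s₂ (ModName.E i) = s₁ + 2 := by simp [msize, hi]
        have hF : msize n m s₁ s₂ (ModName.F i) = s₁ := rfl
        rw [if_neg hi, hE, hF]
        exact Nat.le_of_eq (by ring)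
  choose qg hqg1 hqg2 hqg3 using hq
  have hqginj : ∀ x ∈ (Finset.univ : Finset (Fin n)), ∀ y ∈ Finset.univ,
      qg x = qg y → x = y := by
    intro x _ y _ hxy
    have h1 := hqg1 x
    rw [hxy, hqg1 y] at h1
    exact Option.some_injective _ h1.symm
  -- Step 2 : clause-module backward arcs
  set Ψ : Fin m × ModName n m → ModName n m × ModName n m :=
    fun p => if Before r (mset p.2) (mset (.T p.1)) then (.T p.1, p.2) else (p.2, .T p.1)
    with hΨ
  set GP : Finset (Fin m × ModName n m) :=
    Finset.univ.biUnion (fun j => Finset.univ.biUnion (fun i =>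
      (goods occ r i j).image (fun M => (j, M)))) with hGP
  have memGP : ∀ p ∈ GP, ∃ i : Fin n, grp? p.2 = some i ∧ GoodP occ r i p.1 p.2 := by
    intro p hp
    rw [hGP] at hp
    simp only [Finset.mem_biUnion, Finset.mem_image, Finset.mem_univ, true_and] at hp
    obtain ⟨j, i, M, hM, hpe⟩ := hp
    obtain ⟨hg, hgood⟩ := mem_goods occ r hM
    cases hpe
    exact ⟨i, hg, hgood⟩
  have hperj : ∀ j : Fin m, 3 * n - 1 ≤ ∑ i : Fin n, (goods occ r i j).card := by
    intro j
    by_cases hsp : ∃ i₀ : Fin n, TjSplit r i₀ j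
    · obtain ⟨i₀, hi₀⟩ := hsp
      have h2 : 2 ≤ (goods occ r i₀ j).card := goods_two occ r hs₁ hs₂ hr hstr i₀ j
      have h3 : ∀ i ∈ Finset.univ.erase i₀, 3 ≤ (goods occ r i j).card := by
        intro i hi
        refine goods_three occ r hs₁ hs₂ hr hstr i j (fun hsp' => ?_)
        exact split_unique (r := r) hs₁ hs₂ hr hstr (Finset.mem_erase.mp hi).1 hsp' hi₀
      calc 3 * n - 1 ≤ (n - 1) * 3 + 2 := by omega
        _ ≤ (∑ i ∈ Finset.univ.erase i₀, (goods occ r i j).card) + (goods occ r i₀ j).card := by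
            refine Nat.add_le_add ?_ h2
            have hcs := Finset.card_nsmul_le_sum (Finset.univ.erase i₀)
              (fun i => (goods occ r i j).card) 3 h3
            simpa [Finset.card_erase_of_mem, smul_eq_mul] using hcs
        _ = ∑ i : Fin n, (goods occ r i j).card :=
            Finset.sum_erase_add _ _ (Finset.mem_univ i₀)
    · push_neg at hsp
      calc 3 * n - 1 ≤ n * 3 := by omega
        _ = ∑ _i : Fin n, 3 := by simp [Finset.sum_const, mul_comm]
        _ ≤ _ := Finset.sum_le_sum fun i _ =>
            goods_three occ r hs₁ hs₂ hr hstr i j (hsp i)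
  have hGPcard : (3 * n - 1) * m ≤ GP.card := by
    have hdisj2 : ∀ j : Fin m, ∀ x ∈ (Finset.univ : Finset (Fin n)), ∀ y ∈ Finset.univ,
        x ≠ y → Disjoint ((goods occ r x j).image (fun M => (j, M)))
          ((goods occ r y j).image (fun M => (j, M))) := by
      intro j x _ y _ hxy
      rw [Finset.disjoint_left]
      intro p hpx hpy
      obtain ⟨Mx, hMx, hex⟩ := Finset.mem_image.mp hpx
      obtain ⟨My, hMy, hey⟩ := Finset.mem_image.mp hpy
      have hMM : Mx = My := congrArg Prod.snd (hex.trans hey.symm)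
      have h1 := (mem_goods occ r hMx).1
      have h2 := (mem_goods occ r hMy).1
      rw [hMM] at h1
      rw [h1] at h2
      exact hxy (Option.some_injective _ h2)
    have hdisj1 : ∀ x ∈ (Finset.univ : Finset (Fin m)), ∀ y ∈ Finset.univ, x ≠ y →
        Disjoint (Finset.univ.biUnion (fun i =>
            (goods occ r i x).image (fun M => (x, M))))
          (Finset.univ.biUnion (fun i =>
            (goods occ r i y).image (fun M => (y, M)))) := by
      intro x _ y _ hxy
      rw [Finset.disjoint_left]
      intro p hpx hpy
      simp only [Finset.mem_biUnion, Finset.mem_image, Finset.mem_univ, true_and] at hpx hpy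
      obtain ⟨i1, M1, -, he1⟩ := hpx
      obtain ⟨i2, M2, -, he2⟩ := hpy
      exact hxy (congrArg Prod.fst (he1.trans he2.symm))
    rw [hGP, Finset.card_biUnion hdisj1]
    have hsum : ∀ j : Fin m, 3 * n - 1 ≤
        (Finset.univ.biUnion (fun i => (goods occ r i j).image (fun M => (j, M)))).card := by
      intro j
      rw [Finset.card_biUnion (hdisj2 j)]
      have himg : ∀ i : Fin n, ((goods occ r i j).image (fun M => (j, M))).card
          = (goods occ r i j).card := fun i =>
        Finset.card_image_of_injective _ (fun a b hab => congrArg Prod.snd hab)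
      calc 3 * n - 1 ≤ ∑ i : Fin n, (goods occ r i j).card := hperj j
        _ = ∑ i : Fin n, ((goods occ r i j).image (fun M => (j, M))).card :=
            Finset.sum_congr rfl fun i _ => (himg i).symm
    calc (3 * n - 1) * m = ∑ _j : Fin m, (3 * n - 1) := by
          simp [Finset.sum_const, mul_comm]
      _ ≤ _ := Finset.sum_le_sum fun j _ => hsum j
  have hGPslice : ∀ p ∈ GP, s₁ * s₂ ≤ mslice occ r (Ψ p) := by
    intro p hp
    obtain ⟨i, hgrp, hgood⟩ := memGP p hp
    have hTne : (ModName.T p.1 : ModName n m) ≠ p.2 := by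
      intro hc
      rw [← hc] at hgrp
      simp [grp?] at hgrp
    have hms : s₁ ≤ msize n m s₁ s₂ p.2 := le_msize_of_grp hs₁ hgrp
    rcases hgood with ⟨ht, hb⟩ | ⟨ht, hb⟩
    · have hΨp : Ψ p = (.T p.1, p.2) := by
        rw [hΨ]
        simp only [if_pos hb]
      rw [hΨp]
      have hsl := slice_lb (occ := occ) (r := r) (M := ModName.T p.1) (M' := p.2)
        hTne (Or.inr (Or.inr (Or.inl ⟨p.1, i, rfl, hgrp, ht⟩))) hb
      refine le_trans ?_ hsl
      have : msize n m s₁ s₂ (ModName.T p.1) = s₂ := rfl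
      rw [this, mul_comm]
      exact Nat.mul_le_mul le_rfl hms
    · have hnb : ¬ Before r (mset p.2) (mset (.T p.1)) :=
        before_asymm hr hb (ne _) (ne _)
      have hΨp : Ψ p = (p.2, .T p.1) := by
        rw [hΨ]
        simp only [if_neg hnb]
      rw [hΨp]
      have hsl := slice_lb (occ := occ) (r := r) (M := p.2) (M' := ModName.T p.1)
        (fun hc => hTne hc.symm) (Or.inr (Or.inr (Or.inr ⟨i, p.1, hgrp, rfl, ht⟩))) hb
      refine le_trans ?_ hsl
      have : msize n m s₁ s₂ (ModName.T p.1) = s₂ := rfl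
      rw [this]
      exact Nat.mul_le_mul_right _ hms
  have hΨinj : ∀ p ∈ GP, ∀ p' ∈ GP, Ψ p = Ψ p' → p = p' := by
    intro p hp p' hp' heq
    obtain ⟨i, hg, -⟩ := memGP p hp
    obtain ⟨i', hg', -⟩ := memGP p' hp'
    by_cases h1 : Before r (mset p.2) (mset (.T p.1)) <;>
      by_cases h2 : Before r (mset p'.2) (mset (.T p'.1))
    · rw [hΨ] at heq
      simp only [if_pos h1, if_pos h2, Prod.mk.injEq] at heq
      obtain ⟨hT, hM⟩ := heq
      have : p.1 = p'.1 := by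
        have := hT
        injection this
      exact Prod.ext this hM
    · rw [hΨ] at heq
      simp only [if_pos h1, if_neg h2, Prod.mk.injEq] at heq
      obtain ⟨hT, -⟩ := heq
      rw [← hT] at hg'
      simp [grp?] at hg'
    · rw [hΨ] at heq
      simp only [if_neg h1, if_pos h2, Prod.mk.injEq] at heq
      obtain ⟨hT, -⟩ := heq
      rw [hT] at hg
      simp [grp?] at hg
    · rw [hΨ] at heq
      simp only [if_neg h1, if_neg h2, Prod.mk.injEq] at heq
      obtain ⟨hM, hT⟩ := heq
      have : p.1 = p'.1 := by injection hT
      exact Prod.ext this hM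
  -- assembling
  set t₁ : Finset (ModName n m × ModName n m) := Finset.univ.image qg with ht₁
  set t₂ : Finset (ModName n m × ModName n m) := GP.image Ψ with ht₂
  have hdisj : Disjoint t₁ t₂ := by
    rw [Finset.disjoint_left]
    intro q hq1 hq2
    obtain ⟨i, -, hqi⟩ := Finset.mem_image.mp hq1
    obtain ⟨p, hp, hqp⟩ := Finset.mem_image.mp hq2
    obtain ⟨i', hg', -⟩ := memGP p hp
    by_cases h1 : Before r (mset p.2) (mset (.T p.1))
    · have hΨp : Ψ p = (.T p.1, p.2) := by rw [hΨ]; simp only [if_pos h1]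
      rw [hΨp] at hqp
      have := hqg1 i
      rw [hqi, ← hqp] at this
      simp [grp?] at this
    · have hΨp : Ψ p = (p.2, .T p.1) := by rw [hΨ]; simp only [if_neg h1]
      rw [hΨp] at hqp
      have := hqg2 i
      rw [hqi, ← hqp] at this
      simp [grp?] at this
  have hmain := sum_slice_le occ r (t₁ ∪ t₂)
  rw [Finset.sum_union hdisj] at hmain
  have hsum1 : ∑ i : Fin n,
      (s₁ * s₁ + (if σ i = true then 0 else 2 * s₁ + (if (i : ℕ) = n - 1 then s₁ else 0)))
      = n * s₁ ^ 2 + 2 * (n - k) * s₁ + (if σ lst = false then s₁ else 0) := by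
    have hlsteq : ∀ i : Fin n, ((i : ℕ) = n - 1) ↔ (i = lst) := by
      intro i
      constructor
      · intro h
        apply Fin.ext
        rw [h, hlst]
      · intro h
        rw [h, hlst]
    have e2 : ∀ i : Fin n,
        s₁ * s₁ + (if σ i = true then 0 else 2 * s₁ + (if (i : ℕ) = n - 1 then s₁ else 0))
        = s₁ * s₁ + ((if σ i = true then 0 else 2 * s₁)
            + (if i = lst then (if σ lst = false then s₁ else 0) else 0)) := by
      intro i
      by_cases hi : i = lst
      · rw [hi]
        have hv : ((lst : Fin n) : ℕ) = n - 1 := by rw [hlst]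
        cases hb : σ lst <;> simp [hb, hv]
      · cases hb : σ i <;> simp [hb, hlsteq i, hi]
    calc ∑ i : Fin n,
        (s₁ * s₁ + (if σ i = true then 0 else 2 * s₁ + (if (i : ℕ) = n - 1 then s₁ else 0)))
        = ∑ i : Fin n, (s₁ * s₁ + ((if σ i = true then 0 else 2 * s₁)
            + (if i = lst then (if σ lst = false then s₁ else 0) else 0))) :=
          Finset.sum_congr rfl fun i _ => e2 i
      _ = (∑ _i : Fin n, s₁ * s₁) + ((∑ i : Fin n, (if σ i = true then 0 else 2 * s₁))
            + ∑ i : Fin n, (if i = lst then (if σ lst = false then s₁ else 0) else 0)) := by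
          rw [Finset.sum_add_distrib, Finset.sum_add_distrib]
      _ = n * s₁ ^ 2 + (2 * (n - k) * s₁ + (if σ lst = false then s₁ else 0)) := by
          congr 1
          · rw [Finset.sum_const, Finset.card_univ, Fintype.card_fin, smul_eq_mul, pow_two]
          congr 1
          · rw [Finset.sum_ite, Finset.sum_const, Finset.sum_const, smul_eq_mul, smul_eq_mul]
            have hc := Finset.card_filter_add_card_filter_not
              (s := (Finset.univ : Finset (Fin n))) (p := fun i => σ i = true)
            rw [hk] at hc
            simp only [Finset.card_univ, Fintype.card_fin] at hc
            have : (Finset.univ.filter (fun i : Fin n => ¬ (σ i = true))).card = n - k := by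
              omega
            rw [this]
            ring
          · rw [Finset.sum_ite_eq' Finset.univ lst
              (fun _ => (if σ lst = false then s₁ else 0))]
            simp
      _ = n * s₁ ^ 2 + 2 * (n - k) * s₁ + (if σ lst = false then s₁ else 0) := by ring
  have hS1 : n * s₁ ^ 2 + 2 * (n - k) * s₁ + (if σ lst = false then s₁ else 0)
      ≤ ∑ q ∈ t₁, mslice occ r q := by
    rw [ht₁, Finset.sum_image hqginj]
    rw [← hsum1]
    exact Finset.sum_le_sum fun i _ => hqg3 i
  have hS2 : (3 * n - 1) * m * s₁ * s₂ ≤ ∑ q ∈ t₂, mslice occ r q := by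
    calc (3 * n - 1) * m * s₁ * s₂ = ((3 * n - 1) * m) * (s₁ * s₂) := by ring
      _ ≤ GP.card * (s₁ * s₂) := Nat.mul_le_mul_right _ hGPcard
      _ = ∑ _p ∈ GP, s₁ * s₂ := by rw [Finset.sum_const, smul_eq_mul]
      _ ≤ ∑ p ∈ GP, mslice occ r (Ψ p) := Finset.sum_le_sum hGPslice
      _ = ∑ q ∈ GP.image Ψ, mslice occ r q := (Finset.sum_image hΨinj).symm
      _ = ∑ q ∈ t₂, mslice occ r q := by rw [ht₂]
  have hfin1 : n * s₁ ^ 2 + 2 * (n - k) * s₁ + (if σ lst = false then s₁ else 0)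
      + (3 * n - 1) * m * s₁ * s₂ ≤ (fasSet (arc occ) r).ncard :=
    le_trans (Nat.add_le_add hS1 hS2) hmain
  constructor
  · exact le_trans (Nat.add_le_add_right (Nat.le_add_right _ _) _) hfin1
  · intro hlast
    rw [if_pos hlast] at hfin1
    exact hfin1
end

section
/- The formula φ' is satisfied by the all-False assignment, and φ has a satisfying assignment setting x_n to True whose weight is maximum among all satisfying assignments of φ if and only if φ' has a satisfying assignment setting y_n^1 to True whose weight is maximum among all satisfying assignments of φ'. -/
/-- `σ'` satisfies the clauses of `R`: `(¬y_i^j ∨ y_i^{j+1})` for `1 ≤ j ≤ m−1` together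
with `(¬y_i^m ∨ y_i^1)`, i.e. cyclically `σ' i j = true → σ' i (j+1) = true`. -/
def SatR {n m : ℕ} [NeZero m] (σ' : Fin n → Fin m → Bool) : Prop :=
  ∀ i : Fin n, ∀ j : Fin m, σ' i j = true → σ' i (j + 1) = true

/-- `σ'` satisfies the clauses of `L`: the clauses of `φ` with `x_i` in `c_j` replaced
by `y_i^j`. -/
def SatL {n m : ℕ} (occ : Fin n → Fin m → Option Bool) (σ' : Fin n → Fin m → Bool) : Prop :=
  ∀ j : Fin m, ∃ i : Fin n,
    (occ i j = some true ∧ σ' i j = true) ∨ (occ i j = some false ∧ σ' i j = false)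

/-- `σ'` satisfies `φ'`. -/
def Sat' {n m : ℕ} [NeZero m] (occ : Fin n → Fin m → Option Bool)
    (σ' : Fin n → Fin m → Bool) : Prop :=
  SatR σ' ∧ SatL occ σ'

/-- The weight of an assignment to `φ'`. -/
def wt' {n m : ℕ} (σ' : Fin n → Fin m → Bool) : ℕ :=
  (Finset.univ.filter (fun p : Fin n × Fin m => σ' p.1 p.2 = true)).card


open Fin.NatCast Fin.CommRing in
lemma satR_const {n m : ℕ} [NeZero m] {σ' : Fin n → Fin m → Bool} (h : SatR σ')
    (i : Fin n) {j : Fin m} (hj : σ' i j = true) (j' : Fin m) : σ' i j' = true := by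
  have key : ∀ k : ℕ, σ' i (j + (k : Fin m)) = true := by
    intro k
    induction k with
    | zero => simpa using hj
    | succ k ih =>
      have := h i (j + (k : Fin m)) ih
      have e : (j + (k : Fin m)) + 1 = j + ((k + 1 : ℕ) : Fin m) := by
        push_cast; ring
      rwa [e] at this
  have := key (j' - j).val
  rwa [Fin.cast_val_eq_self, add_sub_cancel] at this

lemma const_eq {n m : ℕ} [NeZero m] {σ' : Fin n → Fin m → Bool} (h : SatR σ')
    (i : Fin n) (j : Fin m) : σ' i j = σ' i 0 := by
  cases h0 : σ' i 0 with
  | true => exact satR_const h i h0 j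
  | false =>
    cases hj : σ' i j with
    | true => rw [satR_const h i hj 0] at h0; exact h0.symm ▸ rfl
    | false => rfl

lemma wt'_const {n m : ℕ} (σ : Fin n → Bool) :
    wt' (fun i (_ : Fin m) => σ i) = m * wt σ := by
  unfold wt' wt
  have : (Finset.univ.filter (fun p : Fin n × Fin m => σ p.1 = true))
      = (Finset.univ.filter (fun i => σ i = true)) ×ˢ Finset.univ := by
    ext p
    simp [Finset.mem_filter, Finset.mem_product]
  rw [this, Finset.card_product, Finset.card_univ, Fintype.card_fin, mul_comm]

/-- `φ'` is satisfied by the all-false assignment, and `φ` has a maximum-weight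
satisfying assignment setting `x_n` to true iff `φ'` has a maximum-weight satisfying
assignment setting `y_n^1` to true. -/
theorem stmt18 (n m : ℕ) (hn : 0 < n) [NeZero m] (occ : Fin n → Fin m → Option Bool)
    (hallF : ∀ j : Fin m, ∃ i : Fin n, occ i j = some false) :
    Sat' occ (fun _ _ => false) ∧
    ((∃ σ : Fin n → Bool, Sat occ σ ∧ σ ⟨n - 1, Nat.sub_lt hn one_pos⟩ = true ∧
        ∀ τ : Fin n → Bool, Sat occ τ → wt τ ≤ wt σ) ↔
      (∃ σ' : Fin n → Fin m → Bool, Sat' occ σ' ∧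
        σ' ⟨n - 1, Nat.sub_lt hn one_pos⟩ 0 = true ∧
        ∀ τ' : Fin n → Fin m → Bool, Sat' occ τ' → wt' τ' ≤ wt' σ')) := by
  have allfalse : Sat' occ (fun _ _ => false) := by
    refine ⟨fun i j h => by simp at h, fun j => ?_⟩
    obtain ⟨i, hi⟩ := hallF j
    exact ⟨i, Or.inr ⟨hi, rfl⟩⟩
  have hm : 0 < m := Nat.pos_of_ne_zero (NeZero.ne m)
  refine ⟨allfalse, ⟨?_, ?_⟩⟩
  · rintro ⟨σ, hsat, htop, hmax⟩
    refine ⟨fun i _ => σ i, ⟨fun i j h => h, fun j => ?_⟩, htop, ?_⟩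
    · obtain ⟨i, hi⟩ := hsat j
      exact ⟨i, hi⟩
    · intro τ' hτ'
      set τ : Fin n → Bool := fun i => τ' i 0 with hτ
      have hconst : τ' = fun i _ => τ i := by
        funext i j; exact const_eq hτ'.1 i j
      have hsatτ : Sat occ τ := by
        intro j
        obtain ⟨i, hi⟩ := hτ'.2 j
        rw [hconst] at hi
        exact ⟨i, hi⟩
      rw [hconst, wt'_const, wt'_const]
      exact Nat.mul_le_mul_left m (hmax τ hsatτ)
  · rintro ⟨σ', hsat', htop, hmax⟩
    set σ : Fin n → Bool := fun i => σ' i 0 with hσ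
    have hconst : σ' = fun i _ => σ i := by
      funext i j; exact const_eq hsat'.1 i j
    refine ⟨σ, ?_, htop, ?_⟩
    · intro j
      obtain ⟨i, hi⟩ := hsat'.2 j
      rw [hconst] at hi
      exact ⟨i, hi⟩
    · intro τ hτ
      have := hmax (fun i _ => τ i) ⟨fun i j h => h, fun j => by
        obtain ⟨i, hi⟩ := hτ j; exact ⟨i, hi⟩⟩
      rw [hconst, wt'_const, wt'_const] at this
      exact Nat.le_of_mul_le_mul_left this hm
end
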